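/- For n ≥ 4 and a fixed triple of distinct i, j, k, the number of subsets S ⊆ {1,...,n} with 1 ∈ S (representatives of cuts) whose cut vector δ(S) satisfies δ(S)_{ij} − δ(S)_{ik} − δ(S)_{jk} = 0 and δ(S) ≠ 0 is exactly 3·2^(n−3) − 1. -/

import Mathlib

/-- The cut (semi)metric of a subset `S ⊆ {1,…,n}`. -/
def cutFn {n : ℕ} (S : Finset (Fin n)) (i j : Fin n) : ℝ :=
  if (i ∈ S) ↔ (j ∈ S) then 0 else 1

open Finset

lemma card_filter_inter_eq {α : Type*} [Fintype α] [DecidableEq α] (t u : Finset α)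
    (h : u ⊆ t) :
    (Finset.univ.filter (fun S : Finset α => S ∩ t = u)).card =
      2 ^ (Fintype.card α - t.card) := by
  rw [← Finset.card_compl t, ← Finset.card_powerset]
  apply Finset.card_nbij' (i := fun S => S \ t) (j := fun V => V ∪ u)
  · intro S hS
    simp only [Finset.mem_coe, mem_filter, mem_univ, true_and] at hS
    simp only [Finset.mem_coe, mem_powerset]
    intro x hx
    simp only [mem_sdiff] at hx
    simp [hx.2]
  · intro V hV
    simp only [Finset.mem_coe, mem_powerset] at hV
    simp only [Finset.mem_coe, mem_filter, mem_univ, true_and]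
    rw [Finset.union_inter_distrib_right]
    have h1 : V ∩ t = ∅ := by
      rw [← Finset.disjoint_iff_inter_eq_empty]
      exact (disjoint_compl_right.mono_right hV).symm
    rw [h1, Finset.empty_union, Finset.inter_eq_left.mpr h]
  · intro S hS
    simp only [Finset.mem_coe, mem_filter, mem_univ, true_and] at hS
    rw [← hS]
    exact Finset.sdiff_union_inter S t
  · intro V hV
    simp only [Finset.mem_coe, mem_powerset] at hV
    beta_reduce
    rw [Finset.union_sdiff_distrib]
    have h1 : V \ t = V := by
      rw [Finset.sdiff_eq_self_iff_disjoint]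
      exact (disjoint_compl_right.mono_right hV).symm
    have h2 : u \ t = ∅ := Finset.sdiff_eq_empty_iff_subset.mpr h
    rw [h1, h2, Finset.union_empty]

lemma inter_eq_iff' {α : Type*} [DecidableEq α] (t u S : Finset α) (h : u ⊆ t) :
    S ∩ t = u ↔ ∀ x ∈ t, (x ∈ S ↔ x ∈ u) := by
  constructor
  · intro he x hx
    rw [← he]; simp [hx]
  · intro hx
    ext y
    simp only [mem_inter]
    constructor
    · rintro ⟨hyS, hyt⟩; exact (hx y hyt).1 hyS
    · intro hyu; exact ⟨(hx y (h hyu)).2 hyu, h hyu⟩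

lemma cut_eq_iff {n : ℕ} (S : Finset (Fin n)) (i j k : Fin n) :
    cutFn S i j - cutFn S i k - cutFn S j k = 0 ↔
      ¬((i ∈ S ↔ j ∈ S) ∧ ¬(k ∈ S ↔ i ∈ S)) := by
  unfold cutFn
  split_ifs with h1 h2 h3 <;> norm_num <;> tauto

lemma cut_ne_iff {n : ℕ} (S : Finset (Fin n)) (z : Fin n) (hz : z ∈ S) :
    cutFn S ≠ 0 ↔ S ≠ Finset.univ := by
  constructor
  · intro h hu
    apply h
    funext p q
    simp [cutFn, hu]
  · intro h hc
    apply h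
    rw [Finset.eq_univ_iff_forall]
    intro q
    have := congrFun (congrFun hc z) q
    simp only [cutFn, Pi.zero_apply] at this
    by_cases hq : z ∈ S ↔ q ∈ S
    · exact hq.1 hz
    · rw [if_neg hq] at this; norm_num at this

lemma cardA3 {α : Type*} [Fintype α] [DecidableEq α] (a b c : α)
    (hab : a ≠ b) (hac : a ≠ c) (hbc : b ≠ c) :
    (Finset.univ.filter (fun S : Finset α => a ∈ S ∧ b ∈ S ∧ c ∉ S)).card
      = 2 ^ (Fintype.card α - 3) := by
  have ht : ({a, b, c} : Finset α).card = 3 := by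
    rw [Finset.card_insert_of_notMem (by simp [hab, hac]),
        Finset.card_insert_of_notMem (by simp [hbc]), Finset.card_singleton]
  have hsub : ({a, b} : Finset α) ⊆ {a, b, c} := by
    intro x hx; simp at hx ⊢; tauto
  have he : Finset.univ.filter (fun S : Finset α => a ∈ S ∧ b ∈ S ∧ c ∉ S)
      = Finset.univ.filter (fun S : Finset α => S ∩ {a,b,c} = {a,b}) := by
    apply Finset.filter_congr
    intro S _
    rw [inter_eq_iff' _ _ _ hsub]
    simp only [Finset.forall_mem_insert, Finset.mem_singleton,
      Finset.mem_insert, Finset.mem_singleton, Ne.symm hac, Ne.symm hbc]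
    simp
    tauto
  rw [he, card_filter_inter_eq _ _ hsub, ht]

lemma cardB3 {α : Type*} [Fintype α] [DecidableEq α] (a b c : α)
    (hab : a ≠ b) (hac : a ≠ c) (hbc : b ≠ c) :
    (Finset.univ.filter (fun S : Finset α => a ∈ S ∧ b ∉ S ∧ c ∉ S)).card
      = 2 ^ (Fintype.card α - 3) := by
  have ht : ({a, b, c} : Finset α).card = 3 := by
    rw [Finset.card_insert_of_notMem (by simp [hab, hac]),
        Finset.card_insert_of_notMem (by simp [hbc]), Finset.card_singleton]
  have hsub : ({a} : Finset α) ⊆ {a, b, c} := by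
    intro x hx; simp at hx ⊢; tauto
  have he : Finset.univ.filter (fun S : Finset α => a ∈ S ∧ b ∉ S ∧ c ∉ S)
      = Finset.univ.filter (fun S : Finset α => S ∩ {a,b,c} = {a}) := by
    apply Finset.filter_congr
    intro S _
    rw [inter_eq_iff' _ _ _ hsub]
    simp only [Finset.forall_mem_insert, Finset.mem_singleton,
      Finset.mem_singleton, Ne.symm hab, Ne.symm hac]
    simp
    tauto
  rw [he, card_filter_inter_eq _ _ hsub, ht]

lemma cardA4 {α : Type*} [Fintype α] [DecidableEq α] (a b c d : α)
    (hab : a ≠ b) (hac : a ≠ c) (had : a ≠ d) (hbc : b ≠ c) (hbd : b ≠ d) (hcd : c ≠ d) :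
    (Finset.univ.filter (fun S : Finset α => a ∈ S ∧ b ∈ S ∧ c ∈ S ∧ d ∉ S)).card
      = 2 ^ (Fintype.card α - 4) := by
  have ht : ({a, b, c, d} : Finset α).card = 4 := by
    rw [Finset.card_insert_of_notMem (by simp [hab, hac, had]),
        Finset.card_insert_of_notMem (by simp [hbc, hbd]),
        Finset.card_insert_of_notMem (by simp [hcd]), Finset.card_singleton]
  have hsub : ({a, b, c} : Finset α) ⊆ {a, b, c, d} := by
    intro x hx; simp at hx ⊢; tauto
  have he : Finset.univ.filter (fun S : Finset α => a ∈ S ∧ b ∈ S ∧ c ∈ S ∧ d ∉ S)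
      = Finset.univ.filter (fun S : Finset α => S ∩ {a,b,c,d} = {a,b,c}) := by
    apply Finset.filter_congr
    intro S _
    rw [inter_eq_iff' _ _ _ hsub]
    simp only [Finset.forall_mem_insert, Finset.mem_singleton,
      Finset.mem_insert, Finset.mem_singleton, Ne.symm had, Ne.symm hbd, Ne.symm hcd]
    simp
    tauto
  rw [he, card_filter_inter_eq _ _ hsub, ht]

lemma cardB4 {α : Type*} [Fintype α] [DecidableEq α] (a b c d : α)
    (hab : a ≠ b) (hac : a ≠ c) (had : a ≠ d) (hbc : b ≠ c) (hbd : b ≠ d) (hcd : c ≠ d) :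
    (Finset.univ.filter (fun S : Finset α => a ∈ S ∧ b ∈ S ∧ c ∉ S ∧ d ∉ S)).card
      = 2 ^ (Fintype.card α - 4) := by
  have ht : ({a, b, c, d} : Finset α).card = 4 := by
    rw [Finset.card_insert_of_notMem (by simp [hab, hac, had]),
        Finset.card_insert_of_notMem (by simp [hbc, hbd]),
        Finset.card_insert_of_notMem (by simp [hcd]), Finset.card_singleton]
  have hsub : ({a, b} : Finset α) ⊆ {a, b, c, d} := by
    intro x hx; simp at hx ⊢; tauto
  have he : Finset.univ.filter (fun S : Finset α => a ∈ S ∧ b ∈ S ∧ c ∉ S ∧ d ∉ S)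
      = Finset.univ.filter (fun S : Finset α => S ∩ {a,b,c,d} = {a,b}) := by
    apply Finset.filter_congr
    intro S _
    rw [inter_eq_iff' _ _ _ hsub]
    simp only [Finset.forall_mem_insert, Finset.mem_singleton,
      Finset.mem_insert, Finset.mem_singleton, Ne.symm hac, Ne.symm hbc,
      Ne.symm had, Ne.symm hbd]
    simp
    tauto
  rw [he, card_filter_inter_eq _ _ hsub, ht]


set_option maxHeartbeats 2000000 in
lemma count_good (n : ℕ) (hn : 4 ≤ n) (z i j k : Fin n)
    (hij : i ≠ j) (hik : i ≠ k) (hjk : j ≠ k) :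
    (Finset.univ.filter (fun S : Finset (Fin n) =>
        z ∈ S ∧ ¬((i ∈ S ↔ j ∈ S) ∧ ¬(k ∈ S ↔ i ∈ S)))).card = 3 * 2 ^ (n - 3) := by
  -- the sets containing z
  have hF : (Finset.univ.filter (fun S : Finset (Fin n) => z ∈ S)).card = 2 ^ (n - 1) := by
    have he : Finset.univ.filter (fun S : Finset (Fin n) => z ∈ S)
        = Finset.univ.filter (fun S : Finset (Fin n) => S ∩ {z} = {z}) := by
      apply Finset.filter_congr
      intro S _
      rw [inter_eq_iff' _ _ _ (Finset.Subset.refl _)]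
      simp
    rw [he, card_filter_inter_eq _ _ (Finset.Subset.refl _)]
    simp
  -- split into bad and good
  have hunion : Finset.univ.filter (fun S : Finset (Fin n) => z ∈ S)
      = Finset.univ.filter (fun S : Finset (Fin n) =>
          z ∈ S ∧ ((i ∈ S ↔ j ∈ S) ∧ ¬(k ∈ S ↔ i ∈ S)))
        ∪ Finset.univ.filter (fun S : Finset (Fin n) =>
          z ∈ S ∧ ¬((i ∈ S ↔ j ∈ S) ∧ ¬(k ∈ S ↔ i ∈ S))) := by
    ext S
    simp only [Finset.mem_filter, Finset.mem_univ, true_and, Finset.mem_union]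
    tauto
  have hdisj0 : Disjoint
      (Finset.univ.filter (fun S : Finset (Fin n) =>
          z ∈ S ∧ ((i ∈ S ↔ j ∈ S) ∧ ¬(k ∈ S ↔ i ∈ S))))
      (Finset.univ.filter (fun S : Finset (Fin n) =>
          z ∈ S ∧ ¬((i ∈ S ↔ j ∈ S) ∧ ¬(k ∈ S ↔ i ∈ S)))) := by
    rw [Finset.disjoint_left]
    intro S h1 h2
    simp only [Finset.mem_filter, Finset.mem_univ, true_and] at h1 h2
    tauto
  have hsplit : (Finset.univ.filter (fun S : Finset (Fin n) =>
          z ∈ S ∧ ((i ∈ S ↔ j ∈ S) ∧ ¬(k ∈ S ↔ i ∈ S)))).card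
      + (Finset.univ.filter (fun S : Finset (Fin n) =>
          z ∈ S ∧ ¬((i ∈ S ↔ j ∈ S) ∧ ¬(k ∈ S ↔ i ∈ S)))).card
      = 2 ^ (n - 1) := by
    rw [← hF, hunion, Finset.card_union_of_disjoint hdisj0]
  -- count the bad sets
  have hbadeq : Finset.univ.filter
        (fun S : Finset (Fin n) => z ∈ S ∧ ((i ∈ S ↔ j ∈ S) ∧ ¬(k ∈ S ↔ i ∈ S)))
      = Finset.univ.filter (fun S : Finset (Fin n) => z ∈ S ∧ i ∈ S ∧ j ∈ S ∧ k ∉ S)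
        ∪ Finset.univ.filter (fun S : Finset (Fin n) => z ∈ S ∧ i ∉ S ∧ j ∉ S ∧ k ∈ S) := by
    ext S
    simp only [Finset.mem_filter, Finset.mem_univ, true_and, Finset.mem_union]
    tauto
  have hdisj : Disjoint
      (Finset.univ.filter (fun S : Finset (Fin n) => z ∈ S ∧ i ∈ S ∧ j ∈ S ∧ k ∉ S))
      (Finset.univ.filter (fun S : Finset (Fin n) => z ∈ S ∧ i ∉ S ∧ j ∉ S ∧ k ∈ S)) := by
    rw [Finset.disjoint_left]
    intro S h1 h2
    simp only [Finset.mem_filter, Finset.mem_univ, true_and] at h1 h2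
    tauto
  have hbadcard : (Finset.univ.filter
        (fun S : Finset (Fin n) => z ∈ S ∧ ((i ∈ S ↔ j ∈ S) ∧ ¬(k ∈ S ↔ i ∈ S)))).card
      = 2 ^ (n - 3) := by
    rw [hbadeq, Finset.card_union_of_disjoint hdisj]
    by_cases hzi : z = i
    · subst hzi
      have h2 : (Finset.univ.filter
          (fun S : Finset (Fin n) => z ∈ S ∧ z ∉ S ∧ j ∉ S ∧ k ∈ S)).card = 0 := by
        rw [Finset.card_eq_zero, Finset.filter_eq_empty_iff]
        intro S _; tauto
      have h1 : Finset.univ.filter (fun S : Finset (Fin n) => z ∈ S ∧ z ∈ S ∧ j ∈ S ∧ k ∉ S)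
          = Finset.univ.filter (fun S : Finset (Fin n) => z ∈ S ∧ j ∈ S ∧ k ∉ S) := by
        apply Finset.filter_congr; intro S _; tauto
      rw [h1, h2, cardA3 z j k hij hik hjk]
      simp
    · by_cases hzj : z = j
      · subst hzj
        have h2 : (Finset.univ.filter
            (fun S : Finset (Fin n) => z ∈ S ∧ i ∉ S ∧ z ∉ S ∧ k ∈ S)).card = 0 := by
          rw [Finset.card_eq_zero, Finset.filter_eq_empty_iff]
          intro S _; tauto
        have h1 : Finset.univ.filter (fun S : Finset (Fin n) => z ∈ S ∧ i ∈ S ∧ z ∈ S ∧ k ∉ S)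
            = Finset.univ.filter (fun S : Finset (Fin n) => z ∈ S ∧ i ∈ S ∧ k ∉ S) := by
          apply Finset.filter_congr; intro S _; tauto
        rw [h1, h2, cardA3 z i k (Ne.symm hij) hjk hik]
        simp
      · by_cases hzk : z = k
        · subst hzk
          have h1 : (Finset.univ.filter
              (fun S : Finset (Fin n) => z ∈ S ∧ i ∈ S ∧ j ∈ S ∧ z ∉ S)).card = 0 := by
            rw [Finset.card_eq_zero, Finset.filter_eq_empty_iff]
            intro S _; tauto
          have h2 : Finset.univ.filter (fun S : Finset (Fin n) => z ∈ S ∧ i ∉ S ∧ j ∉ S ∧ z ∈ S)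
              = Finset.univ.filter (fun S : Finset (Fin n) => z ∈ S ∧ i ∉ S ∧ j ∉ S) := by
            apply Finset.filter_congr; intro S _; tauto
          rw [h1, h2, cardB3 z i j (Ne.symm hik) (Ne.symm hjk) hij]
          simp
        · have h2 : Finset.univ.filter (fun S : Finset (Fin n) => z ∈ S ∧ i ∉ S ∧ j ∉ S ∧ k ∈ S)
              = Finset.univ.filter
                (fun S : Finset (Fin n) => z ∈ S ∧ k ∈ S ∧ i ∉ S ∧ j ∉ S) := by
            apply Finset.filter_congr; intro S _; tauto
          rw [h2, cardA4 z i j k hzi hzj hzk hij hik hjk,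
              cardB4 z k i j hzk hzi hzj (Ne.symm hik) (Ne.symm hjk) hij]
          simp only [Fintype.card_fin]
          obtain ⟨m, rfl⟩ : ∃ m, n = m + 4 := ⟨n - 4, by omega⟩
          have e1 : m + 4 - 4 = m := by omega
          have e2 : m + 4 - 3 = m + 1 := by omega
          rw [e1, e2, pow_succ]
          ring
  -- conclude
  obtain ⟨m, rfl⟩ : ∃ m, n = m + 4 := ⟨n - 4, by omega⟩
  have e1 : m + 4 - 1 = m + 3 := by omega
  have e2 : m + 4 - 3 = m + 1 := by omega
  rw [e1] at hsplit
  rw [e2] at hbadcard ⊢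
  have hp : (2:ℕ) ^ (m + 3) = 2 ^ (m + 1) * 4 := by ring
  omega

set_option maxHeartbeats 2000000 in
theorem card_cuts_on_triangle_facet (n : ℕ) (hn : 4 ≤ n)
    (i j k : Fin n) (hij : i ≠ j) (hik : i ≠ k) (hjk : j ≠ k) :
    {S : Finset (Fin n) |
        (⟨0, by omega⟩ : Fin n) ∈ S ∧
        cutFn S i j - cutFn S i k - cutFn S j k = 0 ∧
        cutFn S ≠ 0}.ncard = 3 * 2 ^ (n - 3) - 1 := by
  set z : Fin n := ⟨0, by omega⟩ with hzdef
  have hset : {S : Finset (Fin n) |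
        (⟨0, by omega⟩ : Fin n) ∈ S ∧
        cutFn S i j - cutFn S i k - cutFn S j k = 0 ∧
        cutFn S ≠ 0}
      = ↑(Finset.univ.filter (fun S : Finset (Fin n) =>
          z ∈ S ∧ ¬((i ∈ S ↔ j ∈ S) ∧ ¬(k ∈ S ↔ i ∈ S)) ∧ S ≠ Finset.univ)) := by
    ext S
    simp only [Set.mem_setOf_eq, Finset.coe_filter, Finset.mem_univ, true_and]
    constructor
    · rintro ⟨h0, h1, h2⟩
      exact ⟨h0, (cut_eq_iff S i j k).1 h1, (cut_ne_iff S z h0).1 h2⟩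
    · rintro ⟨h0, h1, h2⟩
      exact ⟨h0, (cut_eq_iff S i j k).2 h1, (cut_ne_iff S z h0).2 h2⟩
  rw [hset, Set.ncard_coe_finset]
  have hGfinal :
      Finset.univ.filter (fun S : Finset (Fin n) =>
        z ∈ S ∧ ¬((i ∈ S ↔ j ∈ S) ∧ ¬(k ∈ S ↔ i ∈ S)) ∧ S ≠ Finset.univ)
      = (Finset.univ.filter (fun S : Finset (Fin n) =>
        z ∈ S ∧ ¬((i ∈ S ↔ j ∈ S) ∧ ¬(k ∈ S ↔ i ∈ S)))).erase Finset.univ := by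
    ext S
    simp only [Finset.mem_filter, Finset.mem_univ, true_and, Finset.mem_erase]
    tauto
  have huniv_mem : (Finset.univ : Finset (Fin n)) ∈
      Finset.univ.filter (fun S : Finset (Fin n) =>
        z ∈ S ∧ ¬((i ∈ S ↔ j ∈ S) ∧ ¬(k ∈ S ↔ i ∈ S))) := by
    simp
  rw [hGfinal, Finset.card_erase_of_mem huniv_mem,
    count_good n hn z i j k hij hik hjk]
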